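/- Let d, l ≥ 1 and let Θ ⊆ ℝ^l be nonempty with θ₀ ∈ Θ. For each n, let (Ωₙ, Pₙ) be a probability space carrying ℝ^d-valued random vectors X_{n,1},…,X_{n,n} and X̂_{n,1},…,X̂_{n,n} and Θ-valued random vectors θ̂ₙ, θ̃ₙ. Let f : ℝ^d × Θ → ℝ and Q : Θ → ℝ. Assume: (i) for every ε > 0 there exists δ > 0 such that ‖x−y‖ < δ implies |f(x,θ) − f(y,θ)| < ε for all θ ∈ Θ; (ii) maxᵢ ‖X̂_{n,i} − X_{n,i}‖ → 0 in probability; (iii) sup_{θ∈Θ} |(1/n) Σᵢ (−f(X_{n,i},θ)) − Q(θ)| → 0 in probability; (iv) Q has a unique well-separated minimum at θ₀, i.e. for every ε > 0, inf{Q(θ) : θ ∈ Θ, ‖θ−θ₀‖ ≥ ε} > Q(θ₀); (v) pointwise on Ωₙ, θ̂ₙ minimizes θ ↦ −(1/n) Σᵢ f(X_{n,i},θ) over Θ and θ̃ₙ minimizes θ ↦ −(1/n) Σᵢ f(X̂_{n,i},θ) over Θ. Then for every c > 0, Pₙ(‖θ̂ₙ − θ̃ₙ‖ > c) → 0 as n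 → ∞. -/

import Mathlib

open MeasureTheory

/-- Lemma 1 of the paper: under uniform-in-θ continuity of `f`,
convergence in probability of the estimated latent positions to the true ones
(uniformly over coordinates), a uniform weak law for the empirical contrast,
and a well-separated unique minimum of `Q` at `θ₀`, the minimum-contrast
estimators computed from the true and from the estimated latent positions
coincide asymptotically: `Pₙ(‖θ̂ₙ − θ̃ₙ‖ > c) → 0` for every `c > 0`. -/
theorem mle_vs_spectral_mle_consistency
    (d l : ℕ) (hd : 1 ≤ d) (hl : 1 ≤ l)
    (Θ : Set (EuclideanSpace ℝ (Fin l))) (hΘ : Θ.Nonempty)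
    (θ₀ : EuclideanSpace ℝ (Fin l)) (hθ₀ : θ₀ ∈ Θ)
    (Ω : ℕ → Type) [mΩ : ∀ n, MeasurableSpace (Ω n)]
    (P : ∀ n, Measure (Ω n)) [∀ n, IsProbabilityMeasure (P n)]
    (X Xhat : ∀ n : ℕ, Fin n → Ω n → EuclideanSpace ℝ (Fin d))
    (θhat θtilde : ∀ n : ℕ, Ω n → EuclideanSpace ℝ (Fin l))
    (f : EuclideanSpace ℝ (Fin d) → EuclideanSpace ℝ (Fin l) → ℝ)
    (Q : EuclideanSpace ℝ (Fin l) → ℝ)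
    -- (i) uniform-in-θ uniform continuity of f in x
    (hf : ∀ ε > (0 : ℝ), ∃ δ > (0 : ℝ), ∀ x y : EuclideanSpace ℝ (Fin d),
      ‖x - y‖ < δ → ∀ θ ∈ Θ, |f x θ - f y θ| < ε)
    -- (ii) max_i ‖X̂_{n,i} − X_{n,i}‖ → 0 in probability
    (hXconv : ∀ c > (0 : ℝ), Filter.Tendsto
      (fun n => P n {ω | ∃ i : Fin n, c < ‖Xhat n i ω - X n i ω‖})
      Filter.atTop (nhds 0))
    -- (iii) uniform weak law: sup_θ |(1/n) Σ_i (−f(X_{n,i},θ)) − Q(θ)| → 0 in probability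
    (hQconv : ∀ c > (0 : ℝ), Filter.Tendsto
      (fun n => P n {ω | ∃ θ ∈ Θ,
        c < |(1 / n : ℝ) * ∑ i : Fin n, -f (X n i ω) θ - Q θ|})
      Filter.atTop (nhds 0))
    -- (iv) unique well-separated minimum of Q at θ₀
    (hsep : ∀ ε > (0 : ℝ), ∃ cQ : ℝ, Q θ₀ < cQ ∧ ∀ θ ∈ Θ, ε ≤ ‖θ - θ₀‖ → cQ ≤ Q θ)
    -- (v) pointwise minimization over Θ
    (hhatmem : ∀ (n : ℕ) (ω : Ω n), θhat n ω ∈ Θ)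
    (htildemem : ∀ (n : ℕ) (ω : Ω n), θtilde n ω ∈ Θ)
    (hhatmin : ∀ (n : ℕ) (ω : Ω n), ∀ θ ∈ Θ,
      -((1 / n : ℝ) * ∑ i : Fin n, f (X n i ω) (θhat n ω)) ≤
        -((1 / n : ℝ) * ∑ i : Fin n, f (X n i ω) θ))
    (htildemin : ∀ (n : ℕ) (ω : Ω n), ∀ θ ∈ Θ,
      -((1 / n : ℝ) * ∑ i : Fin n, f (Xhat n i ω) (θtilde n ω)) ≤
        -((1 / n : ℝ) * ∑ i : Fin n, f (Xhat n i ω) θ)) :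
    ∀ c > (0 : ℝ), Filter.Tendsto
      (fun n => P n {ω | c < ‖θhat n ω - θtilde n ω‖})
      Filter.atTop (nhds 0) := by
  intro c hc
  obtain ⟨cQ, hQ0, hQsep⟩ := hsep (c / 2) (by positivity)
  have hηpos : 0 < (cQ - Q θ₀) / 5 := by linarith
  set η := (cQ - Q θ₀) / 5 with hηdef
  obtain ⟨δ, hδpos, hfδ⟩ := hf η hηpos
  have hX := hXconv (δ / 2) (by positivity)
  have hQc := hQconv η hηpos
  have hsum := hX.add hQc
  rw [add_zero] at hsum
  refine tendsto_of_tendsto_of_tendsto_of_le_of_le' tendsto_const_nhds hsum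
    (Filter.Eventually.of_forall fun n => zero_le) ?_
  filter_upwards [Filter.eventually_ge_atTop 1] with n hn
  have hincl : {ω : Ω n | c < ‖θhat n ω - θtilde n ω‖} ⊆
      {ω | ∃ i : Fin n, δ / 2 < ‖Xhat n i ω - X n i ω‖} ∪
      {ω | ∃ θ ∈ Θ, η < |(1 / n : ℝ) * ∑ i : Fin n, -f (X n i ω) θ - Q θ|} := by
    intro ω hω
    by_contra hmem
    simp only [Set.mem_union, Set.mem_setOf_eq, not_or, not_exists, not_lt] at hmem hω
    obtain ⟨hA, hB⟩ := hmem
    push_neg at hB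
    set Mn : EuclideanSpace ℝ (Fin l) → ℝ :=
      fun θ => (1 / n : ℝ) * ∑ i : Fin n, -f (X n i ω) θ with hMn
    set Mh : EuclideanSpace ℝ (Fin l) → ℝ :=
      fun θ => (1 / n : ℝ) * ∑ i : Fin n, -f (Xhat n i ω) θ with hMh
    have hMnform : ∀ (g : Fin n → EuclideanSpace ℝ (Fin d) → ℝ → ℝ), True := fun _ => trivial
    have hMnmin : Mn (θhat n ω) ≤ Mn θ₀ := by
      have := hhatmin n ω θ₀ hθ₀
      simpa [hMn, Finset.sum_neg_distrib, mul_neg] using this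
    have hMhmin : Mh (θtilde n ω) ≤ Mh θ₀ := by
      have := htildemin n ω θ₀ hθ₀
      simpa [hMh, Finset.sum_neg_distrib, mul_neg] using this
    have hclose : ∀ θ ∈ Θ, |Mh θ - Mn θ| ≤ η := by
      intro θ hθ
      have hnpos : (0 : ℝ) < n := by exact_mod_cast hn
      have h1 : Mh θ - Mn θ =
          (1 / n : ℝ) * ∑ i : Fin n, (f (X n i ω) θ - f (Xhat n i ω) θ) := by
        simp only [hMh, hMn]
        rw [← mul_sub, ← Finset.sum_sub_distrib]
        congr 1
        apply Finset.sum_congr rfl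
        intro i _
        ring
      rw [h1, abs_mul]
      have h2 : |∑ i : Fin n, (f (X n i ω) θ - f (Xhat n i ω) θ)| ≤ (n : ℝ) * η := by
        calc |∑ i : Fin n, (f (X n i ω) θ - f (Xhat n i ω) θ)|
            ≤ ∑ i : Fin n, |f (X n i ω) θ - f (Xhat n i ω) θ| :=
              Finset.abs_sum_le_sum_abs _ _
          _ ≤ ∑ _i : Fin n, η := by
              apply Finset.sum_le_sum
              intro i _
              refine le_of_lt (hfδ _ _ ?_ θ hθ)
              have := hA i
              have : ‖X n i ω - Xhat n i ω‖ ≤ δ / 2 := by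
                rwa [norm_sub_rev]
              linarith
          _ = (n : ℝ) * η := by simp [mul_comm]
      have h3 : |(1 / n : ℝ)| = 1 / n := abs_of_pos (by positivity)
      rw [h3]
      calc (1 / n : ℝ) * |∑ i : Fin n, (f (X n i ω) θ - f (Xhat n i ω) θ)|
          ≤ (1 / n : ℝ) * ((n : ℝ) * η) := by
            apply mul_le_mul_of_nonneg_left h2 (by positivity)
        _ = η := by field_simp
    have hB' : ∀ θ ∈ Θ, |Mn θ - Q θ| ≤ η := hB
    have hBhat := abs_le.mp (hB' (θhat n ω) (hhatmem n ω))
    have hBtilde := abs_le.mp (hB' (θtilde n ω) (htildemem n ω))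
    have hB0 := abs_le.mp (hB' θ₀ hθ₀)
    have hChat := abs_le.mp (hclose (θhat n ω) (hhatmem n ω))
    have hCtilde := abs_le.mp (hclose (θtilde n ω) (htildemem n ω))
    have hC0 := abs_le.mp (hclose θ₀ hθ₀)
    -- Q(θhat) ≤ Mn(θhat) + η ≤ Mn θ₀ + η ≤ Q θ₀ + 2η < cQ
    have hhat_lt : Q (θhat n ω) < cQ := by
      have h1 : Q (θhat n ω) ≤ Mn (θhat n ω) + η := by linarith [hBhat.1]
      have h2 : Mn θ₀ ≤ Q θ₀ + η := by linarith [hB0.2]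
      have : Q (θhat n ω) ≤ Q θ₀ + 2 * η := by linarith
      have : 2 * η < cQ - Q θ₀ := by rw [hηdef]; linarith
      linarith
    have htilde_lt : Q (θtilde n ω) < cQ := by
      have h1 : Q (θtilde n ω) ≤ Mn (θtilde n ω) + η := by linarith [hBtilde.1]
      have h2 : Mn (θtilde n ω) ≤ Mh (θtilde n ω) + η := by linarith [hCtilde.1]
      have h3 : Mh θ₀ ≤ Mn θ₀ + η := by linarith [hC0.2]
      have h4 : Mn θ₀ ≤ Q θ₀ + η := by linarith [hB0.2]
      have : Q (θtilde n ω) ≤ Q θ₀ + 4 * η := by linarith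
      have : 4 * η < cQ - Q θ₀ := by rw [hηdef]; linarith
      linarith
    have hhat_close : ‖θhat n ω - θ₀‖ < c / 2 := by
      by_contra h
      push_neg at h
      exact absurd (hQsep _ (hhatmem n ω) h) (not_le.mpr hhat_lt)
    have htilde_close : ‖θtilde n ω - θ₀‖ < c / 2 := by
      by_contra h
      push_neg at h
      exact absurd (hQsep _ (htildemem n ω) h) (not_le.mpr htilde_lt)
    have htri : ‖θhat n ω - θtilde n ω‖ ≤ ‖θhat n ω - θ₀‖ + ‖θtilde n ω - θ₀‖ := by
      have := norm_sub_le_norm_sub_add_norm_sub (θhat n ω) θ₀ (θtilde n ω)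
      calc ‖θhat n ω - θtilde n ω‖ ≤ ‖θhat n ω - θ₀‖ + ‖θ₀ - θtilde n ω‖ := this
        _ = ‖θhat n ω - θ₀‖ + ‖θtilde n ω - θ₀‖ := by rw [norm_sub_rev θ₀]
    linarith
  calc P n {ω | c < ‖θhat n ω - θtilde n ω‖}
      ≤ P n ({ω | ∃ i : Fin n, δ / 2 < ‖Xhat n i ω - X n i ω‖} ∪
        {ω | ∃ θ ∈ Θ, η < |(1 / n : ℝ) * ∑ i : Fin n, -f (X n i ω) θ - Q θ|}) :=
        measure_mono hincl
    _ ≤ _ := measure_union_le _ _
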